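/- Let p be a consistent binary splitting rule with rate sequence (λ_n)_{n≥2} satisfying λ_{n+1}(1-p(n,1)) = λ_n. Then for all 1 ≤ k ≤ n/2, λ_n · p(k, n-k) = Σ_{j=0}^{k} (-1)^{k-j+1} C(k,j) λ_{n-j} (with the convention λ_1 = 0). -/
import Mathlib

open Finset

lemma sum_pascal (lam : ℕ → ℝ) (k n : ℕ) :
    ∑ j ∈ Finset.range (k+2), (-1:ℝ)^(k+j) * ((k+1).choose j : ℝ) * lam (n-j)
      = (∑ j ∈ Finset.range (k+1), (-1:ℝ)^(k+j+1) * (k.choose j : ℝ) * lam (n-1-j))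
        - ∑ j ∈ Finset.range (k+1), (-1:ℝ)^(k+j+1) * (k.choose j : ℝ) * lam (n-j) := by
  rw [Finset.sum_range_succ' (fun j => (-1:ℝ)^(k+j) * ((k+1).choose j : ℝ) * lam (n-j)) (k+1)]
  have h1 : ∀ j ∈ Finset.range (k+1),
      (-1:ℝ)^(k+(j+1)) * (((k+1).choose (j+1) : ℕ) : ℝ) * lam (n-(j+1))
        = (-1:ℝ)^(k+j+1) * (k.choose j : ℝ) * lam (n-1-j)
          + (-1:ℝ)^(k+j+1) * (k.choose (j+1) : ℝ) * lam (n-(j+1)) := by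
    intro j _
    have hnn : n - (j+1) = n - 1 - j := by omega
    rw [Nat.choose_succ_succ, hnn]
    push_cast
    ring
  rw [Finset.sum_congr rfl h1, Finset.sum_add_distrib]
  have h2 : (∑ j ∈ Finset.range (k+1), (-1:ℝ)^(k+j+1) * (k.choose (j+1) : ℝ) * lam (n-(j+1)))
      + (-1:ℝ)^(k+0) * (((k+1).choose 0 : ℕ) : ℝ) * lam (n-0)
      = - ∑ j ∈ Finset.range (k+1), (-1:ℝ)^(k+j+1) * (k.choose j : ℝ) * lam (n-j) := by
    rw [Finset.sum_range_succ,
      Finset.sum_range_succ' (fun j => (-1:ℝ)^(k+j+1) * (k.choose j : ℝ) * lam (n-j)) k]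
    simp only [Nat.choose_succ_self, Nat.cast_zero, Nat.choose_zero_right, Nat.cast_one]
    rw [neg_add, ← Finset.sum_neg_distrib]
    have h3 : ∀ j ∈ Finset.range k,
        (-1:ℝ)^(k+j+1) * (k.choose (j+1) : ℝ) * lam (n-(j+1))
          = -((-1:ℝ)^(k+(j+1)+1) * (k.choose (j+1) : ℝ) * lam (n-(j+1))) := by
      intro j _
      ring
    rw [Finset.sum_congr rfl h3]
    ring
  linarith [h2]

lemma sign_convert (lam : ℕ → ℝ) (k n : ℕ) :
    ∑ j ∈ Finset.range (k+1), (-1:ℝ)^(k-j+1) * (k.choose j : ℝ) * lam (n-j)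
      = ∑ j ∈ Finset.range (k+1), (-1:ℝ)^(k+j+1) * (k.choose j : ℝ) * lam (n-j) := by
  apply Finset.sum_congr rfl
  intro j hj
  have hjk : j ≤ k := by simpa using Nat.lt_succ_iff.mp (Finset.mem_range.mp hj)
  have he : k + j + 1 = (k - j + 1) + 2 * j := by omega
  have hs : ((-1:ℝ))^(k+j+1) = (-1:ℝ)^(k-j+1) := by
    rw [he, pow_add, pow_mul]
    norm_num
  rw [hs]

/-- A consistent binary splitting rule: nonnegative, symmetric, normalized,
and satisfying the consistency equation. -/
def IsConsistentSplittingRule (p : ℕ → ℕ → ℝ) : Prop :=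
  (∀ i j : ℕ, 1 ≤ i → 1 ≤ j → 0 ≤ p i j) ∧
  (∀ i j : ℕ, 1 ≤ i → 1 ≤ j → p i j = p j i) ∧
  (∀ n : ℕ, 2 ≤ n →
    ∑ k ∈ Finset.Icc 1 (n - 1), ((n - 1).choose (k - 1) : ℝ) * p k (n - k) = 1) ∧
  (∀ i j : ℕ, 1 ≤ i → 1 ≤ j →
    p i j = p (i + 1) j + p i (j + 1) + p (i + j) 1 * p i j)

/-- the alternating-difference formula
`λ_n p(k, n-k) = Σ_{j=0}^k (-1)^{k-j+1} C(k,j) λ_{n-j}` for `1 ≤ k ≤ n/2`,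
with the convention `λ_1 = 0`. -/
theorem rate_difference_formula
    (p : ℕ → ℕ → ℝ) (hp : IsConsistentSplittingRule p)
    (lam : ℕ → ℝ) (hlam1 : lam 1 = 0)
    (hrate : ∀ n : ℕ, 2 ≤ n → lam (n + 1) * (1 - p n 1) = lam n) :
    ∀ n k : ℕ, 2 ≤ n → 1 ≤ k → 2 * k ≤ n →
      lam n * p k (n - k) =
        ∑ j ∈ Finset.range (k + 1),
          (-1 : ℝ) ^ (k - j + 1) * (k.choose j : ℝ) * lam (n - j) := by
  obtain ⟨hpos, hsym, hnorm, hcons⟩ := hp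
  -- one-step rate identity
  have hstep : ∀ i j : ℕ, 1 ≤ i → 1 ≤ j →
      lam (i + j) * p i j = lam (i + j + 1) * (p (i + 1) j + p i (j + 1)) := by
    intro i j hi hj
    have h2 : 2 ≤ i + j := by omega
    have hr := hrate (i + j) h2
    have hc := hcons i j hi hj
    have key : p i j - p (i + j) 1 * p i j = p (i + 1) j + p i (j + 1) := by linarith
    calc lam (i + j) * p i j = (lam (i + j + 1) * (1 - p (i + j) 1)) * p i j := by rw [hr]
      _ = lam (i + j + 1) * (p i j - p (i + j) 1 * p i j) := by ring
      _ = lam (i + j + 1) * (p (i + 1) j + p i (j + 1)) := by rw [key]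
  -- base case k = 1
  have hbase : ∀ n : ℕ, 2 ≤ n → lam n * p 1 (n - 1) = lam n - lam (n - 1) := by
    intro n hn
    rcases eq_or_lt_of_le hn with h2 | h3
    · -- n = 2
      have hnorm2 := hnorm 2 (le_refl 2)
      simp only [Finset.Icc_self, Finset.sum_singleton] at hnorm2
      norm_num at hnorm2
      rw [← h2]
      norm_num [hnorm2, hlam1]
    · -- n ≥ 3
      have hn1 : 2 ≤ n - 1 := by omega
      have hr := hrate (n - 1) hn1
      have he : n - 1 + 1 = n := by omega
      rw [he] at hr
      have hs : p (n - 1) 1 = p 1 (n - 1) := hsym (n - 1) 1 (by omega) le_rfl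
      rw [hs] at hr
      linarith
  intro n k
  induction k generalizing n with
  | zero => intro _ h; omega
  | succ k ih =>
    intro hn hk hkn
    rcases Nat.eq_zero_or_pos k with hk0 | hk1
    · subst hk0
      rw [hbase n hn]
      rw [Finset.sum_range_succ, Finset.sum_range_succ, Finset.sum_range_zero]
      norm_num
      ring
    · -- inductive step, k ≥ 1, n ≥ 2k+2 ≥ 4
      have hn4 : 4 ≤ n := by omega
      have e1 := ih (n - 1) (by omega) hk1 (by omega)
      have e2 := ih n (by omega) hk1 (by omega)
      have hst := hstep k (n - 1 - k) hk1 (by omega)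
      have ha : k + (n - 1 - k) = n - 1 := by omega
      have hb : n - 1 + 1 = n := by omega
      have hc1 : n - 1 - k + 1 = n - k := by omega
      have hc2 : n - 1 - k = n - (k + 1) := by omega
      rw [ha, hb, hc1, hc2] at hst
      -- hst : lam (n-1) * p k (n - (k+1)) = lam n * (p (k+1) (n-(k+1)) + p k (n-k))
      have hc3 : n - 1 - k = n - (k + 1) := by omega
      rw [hc3] at e1
      have goal_lhs : lam n * p (k + 1) (n - (k + 1))
          = lam (n - 1) * p k (n - (k + 1)) - lam n * p k (n - k) := by linarith
      rw [goal_lhs, e1, e2]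
      rw [sign_convert lam k (n-1), sign_convert lam k n, sign_convert lam (k+1) n]
      have := sum_pascal lam k n
      rw [show k + 1 + 1 = k + 2 from rfl]
      rw [← this]
      apply Finset.sum_congr rfl
      intro j hj
      have hjk : j ≤ k + 1 := by simpa using Nat.lt_succ_iff.mp (Finset.mem_range.mp hj)
      have he : k + 1 + j + 1 = (k + j) + 2 := by omega
      have hs : ((-1:ℝ))^(k+1+j+1) = (-1:ℝ)^(k+j) := by
        rw [he, pow_add]
        norm_num
      rw [hs]
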